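/- For any binary tree t with n leaves (n ≥ 1), the sum of the Loday coordinates equals n(n−1)/2: if at the i-th internal node the left and right subtrees have l_i and r_i leaves respectively, then Σ_{i=1}^{n−1} l_i·r_i = n(n−1)/2. -/
import Mathlib


/-- Planar binary trees. -/
inductive UTree : Type
  | leaf : UTree
  | node : UTree → UTree → UTree

/-- Number of leaves. -/
def UTree.leaves : UTree → ℕ
  | .leaf => 1
  | .node l r => l.leaves + r.leaves

/-- Sum over all internal nodes of (leaves of left subtree) · (leaves of right
subtree): the sum of the Loday coordinates. -/
def UTree.nodeSum : UTree → ℕ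
  | .leaf => 0
  | .node l r => l.leaves * r.leaves + l.nodeSum + r.nodeSum


lemma UTree.one_le_leaves (t : UTree) : 1 ≤ t.leaves := by
  induction t with
  | leaf => simp [UTree.leaves]
  | node l r ihl ihr => simp [UTree.leaves]; omega

lemma loday_aux (t : UTree) : 2 * t.nodeSum = t.leaves * (t.leaves - 1) := by
  induction t with
  | leaf => simp [UTree.leaves, UTree.nodeSum]
  | node l r ihl ihr =>
    have hl := l.one_le_leaves
    have hr := r.one_le_leaves
    simp only [UTree.leaves, UTree.nodeSum]
    obtain ⟨a, ha⟩ := Nat.exists_eq_add_of_le hl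
    obtain ⟨b, hb⟩ := Nat.exists_eq_add_of_le hr
    rw [ha] at ihl
    rw [hb] at ihr
    rw [ha, hb]
    have e1 : 1 + a - 1 = a := by omega
    have e2 : 1 + b - 1 = b := by omega
    have e3 : 1 + a + (1 + b) - 1 = a + b + 1 := by omega
    rw [e1] at ihl
    rw [e2] at ihr
    rw [e3]
    nlinarith [ihl, ihr]

/-- Loday's lemma: for any binary tree with `n` leaves, the sum of the Loday
coordinates `Σ l_i · r_i` equals `n(n-1)/2`. -/
theorem loday_coordinate_sum (t : UTree) (n : ℕ) (h : t.leaves = n)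
    (hn : 1 ≤ n) : 2 * t.nodeSum = n * (n - 1) := by
  subst h; exact loday_aux t
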